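/- Let X be a topological space, (f_n)_{n∈ℕ} a sequence of functions from X to the extended reals [−∞,+∞], and f : X → [−∞,+∞]. Suppose that for every x ∈ X the infimum over all sequences (xⁿ) converging to x of limsup_{n→∞} f_n(xⁿ) and the infimum over all such sequences of liminf_{n→∞} f_n(xⁿ) both equal f(x). Then inf_{x∈X} f(x) ≥ limsup_{n→∞} ( inf_{x∈X} f_n(x) ). -/
import Mathlib

open Filter Topology

/-- If for every `x` the infimum over sequences converging to `x`
of `limsup_n f n (u n)` and of `liminf_n f n (u n)` both equal `flim x`, then
`⨅ x, flim x ≥ limsup_n (⨅ x, f n x)`. -/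
theorem iInf_gammaLimit_ge_limsup_iInf {X : Type*} [TopologicalSpace X]
    (f : ℕ → X → EReal) (flim : X → EReal)
    (h1 : ∀ x : X, (⨅ (u : ℕ → X) (_ : Tendsto u atTop (𝓝 x)),
        limsup (fun n => f n (u n)) atTop) = flim x)
    (h2 : ∀ x : X, (⨅ (u : ℕ → X) (_ : Tendsto u atTop (𝓝 x)),
        liminf (fun n => f n (u n)) atTop) = flim x) :
    (⨅ x : X, flim x) ≥ limsup (fun n => ⨅ x : X, f n x) atTop := by
  refine le_iInf fun x => ?_
  rw [← h1 x]
  refine le_iInf₂ fun u hu => ?_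
  exact limsup_le_limsup (Eventually.of_forall fun n => iInf_le _ (u n))
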